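/- Let K = ℤ[x₁,x₂,…]/(xᵢxⱼ : i,j ≥ 1) be the quotient of the integral polynomial ring in countably many commuting variables by the ideal generated by all products of two variables, let A = K regarded as a K-algebra, and let B be the ideal of A generated by x₁. Then A is finitely presented as a K-algebra, A/B is a finitely presented K-module, B is finitely generated as a K-algebra, but B is not finitely presented as a K-algebra. -/

import Mathlib

/-- The free non-unital associative `K`-algebra on `X`: the semigroup algebra of the free
semigroup `X⁺` over `K`. -/
abbrev FreeNUAlg (K X : Type*) [CommRing K] : Type _ := MonoidAlgebra K (FreeSemigroup X)

/-- The two-sided ideal (as a `K`-submodule closed under left and right multiplication)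
generated by a set in a non-unital `K`-algebra. -/
def idealSpan (K : Type*) {A : Type*} [CommRing K] [NonUnitalRing A] [Module K A]
    (s : Set A) : Submodule K A :=
  sInf {J : Submodule K A | s ⊆ J ∧ ∀ a b : A, b ∈ J → a * b ∈ J ∧ b * a ∈ J}

/-- A non-unital `K`-algebra is finitely generated if some finite subset generates it as a
`K`-algebra. -/
def NUAlgFG (K A : Type*) [CommRing K] [NonUnitalRing A] [Module K A]
    [IsScalarTower K A A] [SMulCommClass K A A] : Prop :=
  ∃ s : Finset A, NonUnitalAlgebra.adjoin K (s : Set A) = ⊤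

/-- A non-unital `K`-algebra is finitely presented if it is isomorphic to the quotient of a
free algebra `K⟨X⟩` on a finite set `X` by a finitely generated two-sided ideal, i.e. there
is a surjection from some `K⟨X⟩`, `X` finite, whose kernel is a finitely generated
two-sided ideal. -/
def NUAlgFP (K A : Type*) [CommRing K] [NonUnitalRing A] [Module K A]
    [IsScalarTower K A A] [SMulCommClass K A A] : Prop :=
  ∃ (n : ℕ) (f : FreeNUAlg K (Fin n) →ₙₐ[K] A),
    Function.Surjective f ∧
      ∃ s : Finset (FreeNUAlg K (Fin n)),
        ∀ x, f x = 0 ↔ x ∈ idealSpan K (s : Set (FreeNUAlg K (Fin n)))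

/-- `K = ℤ[x₁,x₂,…]/(xᵢxⱼ : i,j)`: the integral polynomial ring in countably many
commuting variables modulo all products of two variables. -/
abbrev K17 : Type :=
  MvPolynomial ℕ ℤ ⧸ Ideal.span
    {p : MvPolynomial ℕ ℤ | ∃ i j : ℕ, p = MvPolynomial.X i * MvPolynomial.X j}

/-- The image of the variable `x₁` in `K17`. -/
noncomputable def x17 : K17 := Ideal.Quotient.mk _ (MvPolynomial.X 1)

/-- `B`: the ideal of `A = K17` generated by `x₁`, as a `K`-subalgebra of `K17`. -/
noncomputable def B17 : NonUnitalSubalgebra K17 K17 :=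
  (Ideal.span {x17} : Ideal K17).toNonUnitalSubalgebra
    (fun _ _ _ hy => Ideal.mul_mem_left _ _ hy)

namespace Ex17

open MvPolynomial

noncomputable section

abbrev Ipoly : Ideal (MvPolynomial ℕ ℤ) :=
  Ideal.span {p : MvPolynomial ℕ ℤ | ∃ i j : ℕ, p = MvPolynomial.X i * MvPolynomial.X j}

abbrev mk17 : MvPolynomial ℕ ℤ →+* K17 := Ideal.Quotient.mk Ipoly

lemma coeff_single_mul (p q : MvPolynomial ℕ ℤ) (j : ℕ) :
    coeff (Finsupp.single j 1) (p * q) =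
      constantCoeff p * coeff (Finsupp.single j 1) q
        + coeff (Finsupp.single j 1) p * constantCoeff q := by
  classical
  rw [coeff_mul, Finsupp.antidiagonal_single, Finset.sum_map]
  have h1 : Finset.HasAntidiagonal.antidiagonal (1 : ℕ) = {(0,1),(1,0)} := by decide
  rw [h1]
  simp [constantCoeff_eq, add_comm]

lemma Ipoly_le_low :
    Ipoly ≤ { carrier := {p | constantCoeff p = 0 ∧ ∀ j, coeff (Finsupp.single j 1) p = 0},
              add_mem' := by
                rintro p q ⟨h1, h2⟩ ⟨h3, h4⟩
                refine ⟨by simp [h1, h3], fun j => by simp [coeff_add, h2 j, h4 j]⟩,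
              zero_mem' := by simp,
              smul_mem' := by
                rintro q p ⟨h1, h2⟩
                refine ⟨by simp [smul_eq_mul, h1], fun j => ?_⟩
                rw [smul_eq_mul, coeff_single_mul, h1, h2 j]
                ring } := by
  rw [Ideal.span_le]
  rintro p ⟨i, j, rfl⟩
  constructor
  · simp
  · intro j'
    rw [coeff_single_mul]
    simp

lemma cc_Ipoly {p : MvPolynomial ℕ ℤ} (hp : p ∈ Ipoly) : constantCoeff p = 0 :=
  (Ipoly_le_low hp).1

lemma coeff_single_Ipoly {p : MvPolynomial ℕ ℤ} (hp : p ∈ Ipoly) (j : ℕ) :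
    coeff (Finsupp.single j 1) p = 0 :=
  (Ipoly_le_low hp).2 j

lemma mem_span_X_of_cc {p : MvPolynomial ℕ ℤ} (h : constantCoeff p = 0) :
    p ∈ Ideal.span (Set.range (X : ℕ → MvPolynomial ℕ ℤ)) := by
  have key : ∀ p : MvPolynomial ℕ ℤ,
      p - C (constantCoeff p) ∈ Ideal.span (Set.range (X : ℕ → MvPolynomial ℕ ℤ)) := by
    intro p
    induction p using MvPolynomial.induction_on with
    | C a => simp
    | add p q hp hq =>
        have : p + q - C (constantCoeff (p + q))
            = (p - C (constantCoeff p)) + (q - C (constantCoeff q)) := by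
          rw [map_add, map_add]; ring
        rw [this]; exact add_mem hp hq
    | mul_X p i hp =>
        have : constantCoeff (p * X i) = 0 := by simp
        rw [this, map_zero, sub_zero]
        exact Ideal.mul_mem_left _ _ (Ideal.subset_span ⟨i, rfl⟩)
  have := key p
  rwa [h, map_zero, sub_zero] at this

lemma mul_X_mem_Ipoly {p : MvPolynomial ℕ ℤ} (h : constantCoeff p = 0) :
    p * X 1 ∈ Ipoly := by
  have hp := mem_span_X_of_cc h
  refine Submodule.span_induction ?_ ?_ ?_ ?_ hp
  · rintro x ⟨i, rfl⟩
    exact Ideal.subset_span ⟨i, 1, rfl⟩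
  · simp
  · intro a b _ _ ha hb
    rw [add_mul]; exact add_mem ha hb
  · intro a x _ hx
    rw [smul_eq_mul, mul_assoc]
    exact Ideal.mul_mem_left _ _ hx

/-- The augmentation `K17 →+* ℤ`. -/
def eps : K17 →+* ℤ :=
  Ideal.Quotient.lift Ipoly constantCoeff fun _ hp => cc_Ipoly hp

@[simp] lemma eps_mk (p : MvPolynomial ℕ ℤ) : eps (mk17 p) = constantCoeff p := rfl

/-- The coefficient of `xⱼ`, as a `ℤ`-linear functional on `K17`. -/
def CC (j : ℕ) : K17 →ₗ[ℤ] ℤ :=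
  (Submodule.liftQ (Ipoly.restrictScalars ℤ) (lcoeff ℤ (Finsupp.single j 1))
    (fun _ hp => coeff_single_Ipoly hp j)).comp
    (Submodule.Quotient.restrictScalarsEquiv ℤ Ipoly).symm.toLinearMap

@[simp] lemma CC_mk (j : ℕ) (p : MvPolynomial ℕ ℤ) :
    CC j (mk17 p) = coeff (Finsupp.single j 1) p := rfl

lemma CC_mul (j : ℕ) (a b : K17) :
    CC j (a * b) = eps a * CC j b + CC j a * eps b := by
  obtain ⟨p, rfl⟩ := Ideal.Quotient.mk_surjective a
  obtain ⟨q, rfl⟩ := Ideal.Quotient.mk_surjective b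
  rw [← map_mul]
  show CC j (mk17 (p * q)) = _
  rw [CC_mk, coeff_single_mul]; rfl

@[simp] lemma eps_x17 : eps x17 = 0 := by
  show eps (mk17 (X 1)) = 0
  simp

@[simp] lemma CC_x17 : CC 1 x17 = 1 := by
  show CC 1 (mk17 (X 1)) = 1
  rw [CC_mk, MvPolynomial.coeff_X, if_pos rfl]

lemma eps_intCast (n : ℤ) : eps (n : K17) = n := by simp

lemma mul_x17 (k : K17) : k * x17 = (eps k : K17) * x17 := by
  obtain ⟨p, rfl⟩ := Ideal.Quotient.mk_surjective k
  have h : mk17 ((p - C (constantCoeff p)) * X 1) = 0 := by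
    rw [Ideal.Quotient.eq_zero_iff_mem]
    exact mul_X_mem_Ipoly (by simp)
  have h2 : (eps (mk17 p) : K17) = mk17 (C (constantCoeff p)) := by
    rw [eps_mk]
    push_cast [← map_intCast mk17]
    norm_cast
  have hx : x17 = mk17 (X 1) := rfl
  rw [h2, hx, ← map_mul, ← map_mul]
  rw [sub_mul] at h
  rw [map_sub] at h
  linear_combination h

lemma intCast_mul_x17_eq_zero {n : ℤ} (h : (n : K17) * x17 = 0) : n = 0 := by
  have := congrArg (CC 1) h
  rw [CC_mul, map_zero] at this
  simpa using this

lemma mem_B17_iff {a : K17} : a ∈ B17 ↔ ∃ r : K17, r * x17 = a := by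
  show a ∈ Ideal.span {x17} ↔ _
  exact Ideal.mem_span_singleton'

lemma x17_mul_x17 : x17 * x17 = 0 := by
  show mk17 (X 1) * mk17 (X 1) = 0
  rw [← map_mul, Ideal.Quotient.eq_zero_iff_mem]
  exact Ideal.subset_span ⟨1, 1, rfl⟩

lemma B17_mul_eq_zero {a b : K17} (ha : a ∈ B17) (hb : b ∈ B17) : a * b = 0 := by
  obtain ⟨r, rfl⟩ := mem_B17_iff.mp ha
  obtain ⟨t, rfl⟩ := mem_B17_iff.mp hb
  have : r * x17 * (t * x17) = r * t * (x17 * x17) := by ring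
  rw [this, x17_mul_x17, mul_zero]

end

end Ex17
namespace Ex17

noncomputable section

open MonoidAlgebra FreeSemigroup

set_option maxHeartbeats 800000
set_option synthInstance.maxHeartbeats 400000

-- idealSpan helpers
section Helpers
variable {K A : Type*} [CommRing K] [NonUnitalRing A] [Module K A]

lemma subset_idealSpan (s : Set A) : s ⊆ idealSpan K s := fun x hx =>
  Submodule.mem_sInf.2 fun _ hJ => hJ.1 hx

lemma idealSpan_mul_left {s : Set A} {b : A} (hb : b ∈ idealSpan K s) (a : A) :
    a * b ∈ idealSpan K s :=
  Submodule.mem_sInf.2 fun J hJ => (hJ.2 a b (Submodule.mem_sInf.1 hb J hJ)).1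

lemma idealSpan_mul_right {s : Set A} {b : A} (hb : b ∈ idealSpan K s) (a : A) :
    b * a ∈ idealSpan K s :=
  Submodule.mem_sInf.2 fun J hJ => (hJ.2 a b (Submodule.mem_sInf.1 hb J hJ)).2

lemma idealSpan_le {s : Set A} {J : Submodule K A} (h1 : s ⊆ J)
    (h2 : ∀ a b : A, b ∈ J → a * b ∈ J ∧ b * a ∈ J) : idealSpan K s ≤ J :=
  sInf_le ⟨h1, h2⟩

end Helpers

-- Part 1 : K17 is finitely presented as a K17-algebra

/-- The constant-one mul hom. -/
def oneHom : FreeSemigroup (Fin 1) →ₙ* K17 where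
  toFun := fun _ => (1 : K17)
  map_mul' := fun _ _ => (one_mul 1).symm

def f1 : FreeNUAlg K17 (Fin 1) →ₙₐ[K17] K17 := MonoidAlgebra.liftMagma K17 oneHom

lemma f1_apply (p : FreeNUAlg K17 (Fin 1)) :
    f1 p = ∑ w ∈ p.coeff.support, p.coeff w := by
  show (p.coeff.sum fun m t => t • oneHom m) = _
  rw [Finsupp.sum]
  simp [oneHom]

lemma f1_single (w : FreeSemigroup (Fin 1)) (k : K17) : f1 (MonoidAlgebra.single w k) = k := by
  show ((MonoidAlgebra.single w k).coeff.sum fun m t => t • oneHom m) = _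
  rw [MonoidAlgebra.sum_single_index] <;> simp [oneHom]

def X1 : FreeNUAlg K17 (Fin 1) := MonoidAlgebra.single (of 0) (1 : K17)

def g1 : FreeNUAlg K17 (Fin 1) := X1 * X1 - X1

lemma f1_g1 : f1 g1 = 0 := by
  rw [g1, map_sub, map_mul, X1, f1_single]
  ring

/-- The kernel of `f1` as a submodule. -/
def kerf1 : Submodule K17 (FreeNUAlg K17 (Fin 1)) where
  carrier := {y | f1 y = 0}
  add_mem' := fun {a b} ha hb => by
    show f1 (a + b) = 0
    rw [map_add, ha, hb, add_zero]
  zero_mem' := map_zero f1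
  smul_mem' := fun k a ha => by
    show f1 (k • a) = 0
    rw [map_smul, ha, smul_zero]

lemma single_sub_X1_mem (w : FreeSemigroup (Fin 1)) :
    MonoidAlgebra.single w (1 : K17) - X1 ∈ idealSpan K17 ({g1} : Set (FreeNUAlg K17 (Fin 1))) := by
  induction w using FreeSemigroup.recOnMul with
  | ih1 a =>
      have : a = 0 := Subsingleton.elim _ _
      rw [this, ← X1, sub_self]
      exact zero_mem _
  | ih2 a y _ ihy =>
      have ha : a = 0 := Subsingleton.elim _ _
      subst ha
      have key : MonoidAlgebra.single (of 0 * y) (1 : K17) - X1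
          = X1 * (MonoidAlgebra.single y (1:K17) - X1) + g1 := by
        rw [g1, X1]
        rw [mul_sub, MonoidAlgebra.single_mul_single, one_mul]
        abel
      rw [key]
      exact add_mem (idealSpan_mul_left ihy X1) (subset_idealSpan _ rfl)

lemma NUAlgFP_K17 : NUAlgFP K17 K17 := by
  classical
  refine ⟨1, f1, fun k => ⟨MonoidAlgebra.single (of 0) k, f1_single _ _⟩, {g1}, ?_⟩
  have hgen : (({g1} : Finset _) : Set (FreeNUAlg K17 (Fin 1))) = {g1} := by simp
  rw [hgen]
  intro x
  constructor
  · intro hx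
    have hx0 : ∑ w ∈ x.coeff.support, x.coeff w = 0 := by rw [← f1_apply]; exact hx
    have e2 : ∑ w ∈ x.coeff.support, MonoidAlgebra.single w (x.coeff w) = x := by
      conv_rhs => rw [← MonoidAlgebra.sum_coeff_single x]
      rfl
    have e3 : ∑ w ∈ x.coeff.support, MonoidAlgebra.single (of (0 : Fin 1)) (x.coeff w)
        = MonoidAlgebra.single (of (0 : Fin 1)) (∑ w ∈ x.coeff.support, x.coeff w) := by
      exact (map_sum (MonoidAlgebra.singleAddHom (of (0 : Fin 1))) _ _).symm
    have hdec : x = ∑ w ∈ x.coeff.support,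
        (MonoidAlgebra.single w (x.coeff w) - MonoidAlgebra.single (of (0 : Fin 1)) (x.coeff w)) := by
      rw [Finset.sum_sub_distrib, e2, eq_comm, sub_eq_self]
      exact e3.trans (by rw [hx0]; exact MonoidAlgebra.single_zero _)
    rw [hdec]
    refine Submodule.sum_mem _ fun w _ => ?_
    have hterm : MonoidAlgebra.single w (x.coeff w) - MonoidAlgebra.single (of (0 : Fin 1)) (x.coeff w)
        = x.coeff w • (MonoidAlgebra.single w (1:K17) - X1) := by
      rw [smul_sub (x.coeff w) (MonoidAlgebra.single w (1:K17)) X1, X1,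
        MonoidAlgebra.smul_single', MonoidAlgebra.smul_single', mul_one]
    rw [hterm]
    exact Submodule.smul_mem _ _ (single_sub_X1_mem w)
  · intro hx
    have hle : idealSpan K17 ({g1} : Set (FreeNUAlg K17 (Fin 1))) ≤ kerf1 := by
      refine idealSpan_le ?_ ?_
      · rintro y rfl
        exact f1_g1
      · intro a b hb
        have hb' : f1 b = 0 := hb
        constructor
        · show f1 (a * b) = 0
          rw [map_mul, hb', mul_zero]
        · show f1 (b * a) = 0
          rw [map_mul, hb', zero_mul]
    exact hle hx

end

end Ex17
namespace Ex17

noncomputable section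

set_option maxHeartbeats 800000
set_option synthInstance.maxHeartbeats 400000

lemma B17_toSubmodule : B17.toSubmodule = (Ideal.span {x17} : Ideal K17) := rfl

lemma part2 : Module.FinitePresentation K17 (K17 ⧸ B17.toSubmodule) := by
  refine Module.finitePresentation_of_surjective B17.toSubmodule.mkQ
    (Submodule.mkQ_surjective _) ?_
  rw [Submodule.ker_mkQ, B17_toSubmodule]
  exact ⟨{x17}, by rw [Finset.coe_singleton]⟩

lemma part3 : NUAlgFG K17 B17 := by
  have hx : x17 ∈ B17 := Ideal.subset_span rfl
  refine ⟨{⟨x17, hx⟩}, ?_⟩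
  rw [eq_top_iff]
  rintro ⟨b, hb⟩ -
  obtain ⟨r, hr⟩ := mem_B17_iff.mp hb
  have : (⟨b, hb⟩ : B17) = r • ⟨x17, hx⟩ := by
    apply Subtype.ext
    show b = r • x17
    rw [smul_eq_mul, ← hr]
  rw [this]
  refine SMulMemClass.smul_mem r ?_
  apply NonUnitalAlgebra.subset_adjoin
  simp

end

end Ex17
namespace Ex17

noncomputable section

open MonoidAlgebra FreeSemigroup MvPolynomial

set_option maxHeartbeats 1600000
set_option synthInstance.maxHeartbeats 800000

lemma one_le_length {α} (x : FreeSemigroup α) : 1 ≤ x.length :=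
  Nat.le_add_left 1 _

lemma mul_ne_of {α} (u v : FreeSemigroup α) (i : α) : u * v ≠ of i := by
  intro h
  have h2 := congrArg FreeSemigroup.length h
  rw [FreeSemigroup.length_mul, FreeSemigroup.length_of] at h2
  have := one_le_length u
  have := one_le_length v
  omega

lemma of_inj {α} {i i' : α} (h : of i = of i') : i = i' := congrArg FreeSemigroup.head h

lemma mul_apply_of {n : ℕ} (a b : FreeNUAlg K17 (Fin n)) (i : Fin n) :
    (a * b).coeff (of i) = 0 := by
  classical
  rw [MonoidAlgebra.mul_apply, Finsupp.sum]
  refine Finset.sum_eq_zero fun u _ => ?_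
  rw [Finsupp.sum]
  refine Finset.sum_eq_zero fun v _ => ?_
  rw [if_neg (mul_ne_of u v i)]

lemma CC_finite (a : K17) : {j : ℕ | CC j a ≠ 0}.Finite := by
  obtain ⟨p, rfl⟩ := Ideal.Quotient.mk_surjective a
  refine Set.Finite.subset (Set.Finite.preimage (s := (↑p.support : Set (ℕ →₀ ℕ)))
    (f := fun j : ℕ => Finsupp.single j (1:ℕ))
    ((Finsupp.single_left_injective one_ne_zero).injOn) p.support.finite_toSet) ?_
  intro j hj
  simp only [Set.mem_preimage, Finset.mem_coe, MvPolynomial.mem_support_iff]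
  exact hj

@[simp] lemma eps_mkX (j : ℕ) : eps (mk17 (X j)) = 0 := by simp

@[simp] lemma CC_mkX (j : ℕ) : CC j (mk17 (X j)) = 1 := by
  rw [CC_mk, MvPolynomial.coeff_X, if_pos rfl]

lemma ma_add_apply {G : Type*} (p q : MonoidAlgebra K17 G) (x : G) :
    (p + q).coeff x = p.coeff x + q.coeff x := rfl

lemma ma_smul_apply {G : Type*} (k : K17) (p : MonoidAlgebra K17 G) (x : G) :
    (k • p).coeff x = k * p.coeff x := rfl

section PsiPhi

variable {n : ℕ} (c : Fin n → ℤ) (j : ℕ)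

/-- The linear-part value functional. -/
def psi (p : FreeNUAlg K17 (Fin n)) : ℤ := ∑ i, c i * eps (p.coeff (of i))

/-- The `xⱼ`-component of the linear part. -/
def phi (p : FreeNUAlg K17 (Fin n)) : ℤ := ∑ i, c i * CC j (p.coeff (of i))

lemma psi_zero : psi c (0 : FreeNUAlg K17 (Fin n)) = 0 := by
  simp [psi]

lemma phi_zero : phi c j (0 : FreeNUAlg K17 (Fin n)) = 0 := by
  simp [phi]

lemma psi_add (p q : FreeNUAlg K17 (Fin n)) : psi c (p + q) = psi c p + psi c q := by
  simp only [psi, ma_add_apply, map_add, mul_add]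
  rw [Finset.sum_add_distrib]

lemma phi_add (p q : FreeNUAlg K17 (Fin n)) : phi c j (p + q) = phi c j p + phi c j q := by
  simp only [phi, ma_add_apply, map_add, mul_add]
  rw [Finset.sum_add_distrib]

lemma psi_smul (k : K17) (p : FreeNUAlg K17 (Fin n)) : psi c (k • p) = eps k * psi c p := by
  simp only [psi, ma_smul_apply, map_mul]
  rw [Finset.mul_sum]
  exact Finset.sum_congr rfl fun i _ => by ring

lemma phi_smul (k : K17) (p : FreeNUAlg K17 (Fin n)) :
    phi c j (k • p) = eps k * phi c j p + CC j k * psi c p := by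
  simp only [phi, psi, ma_smul_apply]
  rw [Finset.mul_sum, Finset.mul_sum, ← Finset.sum_add_distrib]
  refine Finset.sum_congr rfl fun i _ => ?_
  rw [CC_mul]
  ring

lemma single_of_apply_ne (a : Fin n) (k : K17) {i : Fin n} (hne : i ≠ a) :
    (MonoidAlgebra.single (of a) k).coeff (of i) = 0 := by
  classical
  rw [MonoidAlgebra.single_apply, if_neg (fun h => hne (of_inj h).symm)]

lemma single_of_apply_self (a : Fin n) (k : K17) :
    (MonoidAlgebra.single (of a) k).coeff (of a) = k := by
  classical
  rw [MonoidAlgebra.single_apply, if_pos rfl]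

lemma psi_single_of (a : Fin n) (k : K17) :
    psi c (MonoidAlgebra.single (of a) k) = c a * eps k := by
  have h0 : ∀ i : Fin n, i ≠ a → c i * eps ((MonoidAlgebra.single (of a) k).coeff (of i)) = 0 := by
    intro i hne
    rw [single_of_apply_ne a k hne, map_zero, mul_zero]
  rw [psi, Fintype.sum_eq_single a h0, single_of_apply_self]

lemma phi_single_of (a : Fin n) (k : K17) :
    phi c j (MonoidAlgebra.single (of a) k) = c a * CC j k := by
  have h0 : ∀ i : Fin n, i ≠ a → c i * CC j ((MonoidAlgebra.single (of a) k).coeff (of i)) = 0 := by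
    intro i hne
    rw [single_of_apply_ne a k hne, map_zero, mul_zero]
  rw [phi, Fintype.sum_eq_single a h0, single_of_apply_self]

lemma psi_mul (a b : FreeNUAlg K17 (Fin n)) : psi c (a * b) = 0 := by
  rw [psi]
  refine Finset.sum_eq_zero fun i _ => ?_
  rw [mul_apply_of, map_zero, mul_zero]

lemma phi_mul (a b : FreeNUAlg K17 (Fin n)) : phi c j (a * b) = 0 := by
  rw [phi]
  refine Finset.sum_eq_zero fun i _ => ?_
  rw [mul_apply_of, map_zero, mul_zero]

lemma psi_single_mul (u v : FreeSemigroup (Fin n)) (k : K17) :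
    psi c (MonoidAlgebra.single (u * v) k) = 0 := by
  rw [psi]
  refine Finset.sum_eq_zero fun i _ => ?_
  have h0 : (MonoidAlgebra.single (u * v) k).coeff (of i) = 0 := by
    classical
    rw [MonoidAlgebra.single_apply, if_neg (mul_ne_of u v i)]
  rw [h0, map_zero, mul_zero]

/-- `psi` as an additive monoid hom. -/
def psiHom : FreeNUAlg K17 (Fin n) →+ ℤ :=
  { toFun := psi c, map_zero' := psi_zero c, map_add' := psi_add c }

lemma psi_sum {ι : Type*} (t : Finset ι) (g : ι → FreeNUAlg K17 (Fin n)) :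
    psi c (∑ w ∈ t, g w) = ∑ w ∈ t, psi c (g w) :=
  map_sum (psiHom c) g t

end PsiPhi

lemma part4 : ¬ NUAlgFP K17 B17 := by
  classical
  rintro ⟨n, f, hsurj, s, hker⟩
  have hmem : ∀ p : FreeNUAlg K17 (Fin n), (f p : K17) ∈ B17 := fun p => (f p).2
  have hXi : ∀ i : Fin n, ∃ r : K17, r * x17 = (f (MonoidAlgebra.single (of i) (1:K17)) : K17) :=
    fun i => mem_B17_iff.mp (hmem _)
  choose r hr using hXi
  set c : Fin n → ℤ := fun i => eps (r i) with hc
  have hfX : ∀ i, (f (MonoidAlgebra.single (of i) (1:K17)) : K17) = ((c i : ℤ) : K17) * x17 := by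
    intro i
    rw [← hr i, mul_x17 (r i)]
  -- value formula
  have hval_single : ∀ (w : FreeSemigroup (Fin n)) (k : K17),
      (f (MonoidAlgebra.single w k) : K17)
        = ((psi c (MonoidAlgebra.single w k) : ℤ) : K17) * x17 := by
    intro w k
    induction w using FreeSemigroup.recOnMul with
    | ih1 a =>
        have e1 : MonoidAlgebra.single (of a) k
            = k • MonoidAlgebra.single (of a) (1:K17) := by
          rw [MonoidAlgebra.smul_single', mul_one]
        rw [e1, map_smul]
        have e2 : ((k • f (MonoidAlgebra.single (of a) (1:K17)) : B17) : K17)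
            = k * (f (MonoidAlgebra.single (of a) (1:K17)) : K17) := rfl
        rw [e2, hfX a, ← e1, psi_single_of]
        rw [show k * (((c a : ℤ) : K17) * x17) = (((c a : ℤ) : K17) * k) * x17 by ring]
        rw [mul_assoc, mul_x17 k]
        push_cast
        ring
    | ih2 a y _ _ =>
        have e1 : MonoidAlgebra.single (of a * y) k
            = MonoidAlgebra.single (of a) k * MonoidAlgebra.single y (1:K17) := by
          rw [MonoidAlgebra.single_mul_single, mul_one]
        have e2 : (f (MonoidAlgebra.single (of a * y) k) : K17) = 0 := by
          rw [e1, map_mul]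
          exact B17_mul_eq_zero (f _).2 (f _).2
        rw [e2, psi_single_mul]
        push_cast
        rw [zero_mul]
  have hval : ∀ p, (f p : K17) = ((psi c p : ℤ) : K17) * x17 := by
    intro p
    have hdecomp : p = ∑ w ∈ p.coeff.support, MonoidAlgebra.single w (p.coeff w) := by
      conv_lhs => rw [← MonoidAlgebra.sum_coeff_single p]
      rfl
    calc (f p : K17) = ∑ w ∈ p.coeff.support, (f (MonoidAlgebra.single w (p.coeff w)) : K17) := by
          conv_lhs => rw [hdecomp]
          rw [map_sum]
          exact AddSubmonoidClass.coe_finset_sum _ _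
      _ = ∑ w ∈ p.coeff.support, ((psi c (MonoidAlgebra.single w (p.coeff w)) : ℤ) : K17) * x17 :=
          Finset.sum_congr rfl fun w _ => hval_single w (p.coeff w)
      _ = ((∑ w ∈ p.coeff.support, psi c (MonoidAlgebra.single w (p.coeff w)) : ℤ) : K17) * x17 := by
          rw [← Finset.sum_mul, ← Int.cast_sum]
      _ = ((psi c p : ℤ) : K17) * x17 := by
          rw [← psi_sum, ← hdecomp]
  -- kernel characterization via psi
  have hker0 : ∀ p, f p = 0 ↔ psi c p = 0 := by
    intro p
    constructor
    · intro h
      have h1 := hval p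
      rw [h, ZeroMemClass.coe_zero] at h1
      exact intCast_mul_x17_eq_zero h1.symm
    · intro h
      have h1 := hval p
      rw [h] at h1
      push_cast at h1
      rw [zero_mul] at h1
      exact Subtype.ext h1
  -- surjectivity gives a nonzero coefficient
  have hx17B : x17 ∈ B17 := Ideal.subset_span rfl
  obtain ⟨p0, hp0⟩ := hsurj ⟨x17, hx17B⟩
  have hψp0 : psi c p0 = 1 := by
    have h1 : ((psi c p0 : ℤ) : K17) * x17 = x17 := by
      rw [← hval p0, hp0]
    have h2 := congrArg (CC 1) h1
    rw [CC_mul, CC_x17, eps_x17, mul_one, mul_zero, add_zero, map_intCast] at h2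
    exact_mod_cast h2
  have hex : ∃ i, c i ≠ 0 := by
    by_contra h
    push_neg at h
    rw [psi] at hψp0
    simp [h] at hψp0
  obtain ⟨i0, hi0⟩ := hex
  -- fresh variable j
  have hfin : (⋃ q ∈ (s : Set (FreeNUAlg K17 (Fin n))),
      ⋃ i : Fin n, {j : ℕ | CC j (q.coeff (of i)) ≠ 0}).Finite :=
    Set.Finite.biUnion s.finite_toSet fun q _ => Set.finite_iUnion fun i => CC_finite _
  obtain ⟨j, hj⟩ := Set.Infinite.nonempty (Set.Finite.infinite_compl hfin)
  have hjfresh : ∀ q ∈ s, ∀ i : Fin n, CC j (q.coeff (of i)) = 0 := by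
    intro q hq i
    by_contra hne
    exact hj (Set.mem_biUnion hq (Set.mem_iUnion.2 ⟨i, hne⟩))
  -- the separating submodule
  let J' : Submodule K17 (FreeNUAlg K17 (Fin n)) :=
    { carrier := {p | psi c p = 0 ∧ phi c j p = 0}
      add_mem' := fun {a b} ha hb => by
        refine ⟨?_, ?_⟩
        · rw [psi_add, ha.1, hb.1, add_zero]
        · rw [phi_add, ha.2, hb.2, add_zero]
      zero_mem' := ⟨psi_zero c, phi_zero c j⟩
      smul_mem' := fun k p hp => by
        refine ⟨?_, ?_⟩
        · rw [psi_smul, hp.1, mul_zero]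
        · rw [phi_smul, hp.1, hp.2, mul_zero, mul_zero, add_zero] }
  have hle : idealSpan K17 (s : Set (FreeNUAlg K17 (Fin n))) ≤ J' := by
    refine idealSpan_le ?_ ?_
    · intro q hq
      refine ⟨?_, ?_⟩
      · exact (hker0 q).mp ((hker q).mpr (subset_idealSpan _ hq))
      · rw [phi]
        exact Finset.sum_eq_zero fun i _ => by rw [hjfresh q hq i, mul_zero]
    · intro a b _
      exact ⟨⟨psi_mul c a b, phi_mul c j a b⟩, ⟨psi_mul c b a, phi_mul c j b a⟩⟩
  -- the witness
  set z : FreeNUAlg K17 (Fin n) :=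
    MonoidAlgebra.single (of i0) (mk17 (X j)) with hz
  have hψz : psi c z = 0 := by
    rw [hz, psi_single_of, eps_mkX, mul_zero]
  have hzmem : z ∈ idealSpan K17 (s : Set (FreeNUAlg K17 (Fin n))) :=
    (hker z).mp ((hker0 z).mpr hψz)
  have hφz : phi c j z = c i0 := by
    rw [hz, phi_single_of, CC_mkX, mul_one]
  have : phi c j z = 0 := (hle hzmem).2
  rw [hφz] at this
  exact hi0 this

end

end Ex17

/-- Let `K = ℤ[x₁,x₂,…]/(xᵢxⱼ : i,j ≥ 1)`, let `A = K` regarded as a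
`K`-algebra, and let `B` be the ideal of `A` generated by `x₁`. Then `A` is finitely
presented as a `K`-algebra, `A/B` is a finitely presented `K`-module, `B` is finitely
generated as a `K`-algebra, but `B` is not finitely presented as a `K`-algebra. -/
theorem example17 :
    NUAlgFP K17 K17 ∧
    Module.FinitePresentation K17 (K17 ⧸ B17.toSubmodule) ∧
    NUAlgFG K17 B17 ∧
    ¬ NUAlgFP K17 B17 :=
  ⟨Ex17.NUAlgFP_K17, Ex17.part2, Ex17.part3, Ex17.part4⟩
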